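/- Consider a scheduling game on two identical machines with arbitrary positive processing times, where the priority lists are inversed (π₂ is the reverse linear order of π₁), and where the job set J is partitioned into arbitrary competition sets S₁,…,S_c, the rank of each job being computed only among the jobs of its own competition set. Then every greedy profile is a pure Nash equilibrium; in particular, a pure Nash equilibrium exists for any partition of J into competition sets. -/
import Mathlib


open Finset
open scoped Classical

noncomputable section

variable {J M : Type*} [Fintype J]

/-- Completion time of job `j` in profile `s`: the total processing time of the jobs on
`j`'s machine that do not come after `j` in that machine's priority list, divided by the speed. -/
def Ctime (p : J → ℝ) (r : M → ℝ) (π : M → J → ℕ) (s : J → M) (j : J) : ℝ :=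
  (∑ j' ∈ univ.filter (fun j' => s j' = s j ∧ π (s j) j' ≤ π (s j) j), p j') / r (s j)

/-- Rank of job `j` in profile `s`. -/
def rankOf (p : J → ℝ) (r : M → ℝ) (π : M → J → ℕ) (s : J → M) (j : J) : ℝ :=
  ((univ.filter (fun j' => Ctime p r π s j' < Ctime p r π s j)).card : ℝ) +
    (((univ.filter (fun j' => Ctime p r π s j' = Ctime p r π s j)).card : ℝ) + 1) / 2

/-- The unilateral deviation of job `j` to machine `i` is beneficial. -/
def Beneficial (p : J → ℝ) (r : M → ℝ) (π : M → J → ℕ) (s : J → M) (j : J) (i : M) : Prop :=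
  rankOf p r π (Function.update s j i) j < rankOf p r π s j ∨
    (rankOf p r π (Function.update s j i) j = rankOf p r π s j ∧
      Ctime p r π (Function.update s j i) j < Ctime p r π s j)

/-- Pure Nash equilibrium: no job has a beneficial deviation. -/
def IsNE (p : J → ℝ) (r : M → ℝ) (π : M → J → ℕ) (s : J → M) : Prop :=
  ∀ j i, ¬ Beneficial p r π s j i

/-- Partial assignments reachable by the greedy algorithm on identical machines:
repeatedly pick a machine of minimal current load and assign to it the first
not-yet-assigned job in its priority list. -/
inductive GreedyIdentical (p : J → ℝ) (π : M → J → ℕ) : (J → Option M) → Prop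
  | empty : GreedyIdentical p π (fun _ => none)
  | step (f : J → Option M) (i : M) (j : J)
      (hf : GreedyIdentical p π f) (hj : f j = none)
      (hmin : ∀ i', (∑ j' ∈ univ.filter (fun j' => f j' = some i), p j') ≤
          ∑ j' ∈ univ.filter (fun j' => f j' = some i'), p j')
      (hfirst : ∀ j', f j' = none → j' ≠ j → π i j < π i j') :
      GreedyIdentical p π (Function.update f j (some i))

variable {K : Type*}

/-- Rank of job `j` among the jobs of its own competition class (`cls` gives the
competition class of each job). -/
def rankC (cls : J → K) (p : J → ℝ) (r : M → ℝ) (π : M → J → ℕ) (s : J → M) (j : J) : ℝ :=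
  ((univ.filter (fun j' => cls j' = cls j ∧ Ctime p r π s j' < Ctime p r π s j)).card : ℝ) +
    (((univ.filter (fun j' => cls j' = cls j ∧
      Ctime p r π s j' = Ctime p r π s j)).card : ℝ) + 1) / 2

/-- Beneficial deviation in the game with competition classes. -/
def BeneficialC (cls : J → K) (p : J → ℝ) (r : M → ℝ) (π : M → J → ℕ)
    (s : J → M) (j : J) (i : M) : Prop :=
  rankC cls p r π (Function.update s j i) j < rankC cls p r π s j ∨
    (rankC cls p r π (Function.update s j i) j = rankC cls p r π s j ∧
      Ctime p r π (Function.update s j i) j < Ctime p r π s j)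

/-- Pure Nash equilibrium of the game with competition classes. -/
def IsNEC (cls : J → K) (p : J → ℝ) (r : M → ℝ) (π : M → J → ℕ) (s : J → M) : Prop :=
  ∀ j i, ¬ BeneficialC cls p r π s j i

section MyAux

variable {J K : Type*} [Fintype J]

lemma fin2_cases' {a b : Fin 2} (h : a ≠ b) (c : Fin 2) : c = a ∨ c = b := by
  fin_cases a <;> fin_cases b <;> fin_cases c <;> simp_all

lemma invA (p : J → ℝ) (π : Fin 2 → J → ℕ)
    (hrev' : ∀ i i' : Fin 2, i ≠ i' → ∀ a b, π i a < π i b ↔ π i' b < π i' a)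
    {f : J → Option (Fin 2)} (hG : GreedyIdentical p π f) :
    ∀ i j j', f j = some i → f j' ≠ some i → π i j < π i j' := by
  induction hG with
  | empty => intro i j j' h; simp at h
  | step f i0 j0 hf hj hmin hfirst ih =>
    intro i j j' hjm hj'
    rcases eq_or_ne j j0 with rfl | hne
    · rw [Function.update_self] at hjm
      injection hjm with hi; subst hi
      have hj'ne : j' ≠ j := by rintro rfl; rw [Function.update_self] at hj'; exact hj' rfl
      rw [Function.update_of_ne hj'ne] at hj'
      rcases hfj' : f j' with _ | i''
      · exact hfirst j' hfj' hj'ne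
      · have hii : i'' ≠ i0 := by rintro rfl; exact hj' hfj'
        have h2 := ih i'' j' j hfj' (by rw [hj]; simp)
        exact (hrev' i'' i0 hii j' j).mp h2
    · rw [Function.update_of_ne hne] at hjm
      rcases eq_or_ne j' j0 with rfl | hne'
      · exact ih i j j' hjm (by rw [hj]; simp)
      · rw [Function.update_of_ne hne'] at hj'
        exact ih i j j' hjm hj'

lemma invB (p : J → ℝ) (hp : ∀ j, 0 < p j) (π : Fin 2 → J → ℕ)
    (hrev' : ∀ i i' : Fin 2, i ≠ i' → ∀ a b, π i a < π i b ↔ π i' b < π i' a)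
    {f : J → Option (Fin 2)} (hG : GreedyIdentical p π f) :
    ∀ i i' j, i ≠ i' → f j = some i →
      (∑ x ∈ univ.filter (fun x => f x = some i ∧ π i x ≤ π i j), p x)
        ≤ (∑ x ∈ univ.filter (fun x => f x = some i'), p x) + p j := by
  induction hG with
  | empty => intro i i' j _ h; simp at h
  | step f i0 j0 hf hj hmin hfirst ih =>
    have hA := invA p π hrev' hf
    intro i i' j hii' hjm
    rcases eq_or_ne j j0 with rfl | hne
    · rw [Function.update_self] at hjm
      injection hjm with hi; subst hi
      have h1 : univ.filter (fun x => Function.update f j (some i0) x = some i0 ∧ π i0 x ≤ π i0 j)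
          = insert j (univ.filter (fun x => f x = some i0)) := by
        ext x
        simp only [mem_filter, mem_univ, true_and, mem_insert, Function.update_apply]
        by_cases hx : x = j
        · simp [hx]
        · simp only [if_neg hx]
          constructor
          · rintro ⟨ha, _⟩; exact Or.inr ha
          · rintro (h | ha)
            · exact absurd h hx
            · exact ⟨ha, (hA i0 x j ha (by rw [hj]; simp)).le⟩
      have h2 : univ.filter (fun x => Function.update f j (some i0) x = some i') =
          univ.filter (fun x => f x = some i') := by
        ext x
        simp only [mem_filter, mem_univ, true_and, Function.update_apply]
        by_cases hx : x = j
        · subst hx; simp [hj, hii']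
        · simp [if_neg hx]
      rw [h1, h2, sum_insert (by simp [hj])]
      have hm : (∑ x ∈ univ.filter (fun x => f x = some i0), p x)
          ≤ ∑ x ∈ univ.filter (fun x => f x = some i'), p x := by
        convert hmin i' using 3
      linarith
    · rw [Function.update_of_ne hne] at hjm
      have h1 : univ.filter (fun x => Function.update f j0 (some i0) x = some i ∧ π i x ≤ π i j)
          = univ.filter (fun x => f x = some i ∧ π i x ≤ π i j) := by
        ext x
        simp only [mem_filter, mem_univ, true_and]
        by_cases hx : x = j0
        · subst hx
          rw [Function.update_self]
          constructor
          · rintro ⟨h, hle⟩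
            exact absurd hle (not_le.mpr (hA i j x hjm (by rw [hj]; simp)))
          · rintro ⟨h, _⟩; rw [hj] at h; cases h
        · rw [Function.update_of_ne hx]
      have h2 : (∑ x ∈ univ.filter (fun x => f x = some i'), p x)
          ≤ ∑ x ∈ univ.filter (fun x => Function.update f j0 (some i0) x = some i'), p x := by
        rcases eq_or_ne i' i0 with rfl | hi'
        · have he : univ.filter (fun x => Function.update f j0 (some i') x = some i')
              = insert j0 (univ.filter (fun x => f x = some i')) := by
            ext x
            simp only [mem_filter, mem_univ, true_and, mem_insert, Function.update_apply]
            by_cases hx : x = j0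
            · simp [hx]
            · simp [if_neg hx, hx]
          rw [he, sum_insert (by simp [hj])]
          linarith [hp j0]
        · have he : univ.filter (fun x => Function.update f j0 (some i0) x = some i')
              = univ.filter (fun x => f x = some i') := by
            ext x
            simp only [mem_filter, mem_univ, true_and, Function.update_apply]
            by_cases hx : x = j0
            · subst hx; simp [hj, hi'.symm]
            · simp [if_neg hx]
          rw [he]
      rw [h1]
      exact (ih i i' j hii' hjm).trans (by linarith)

lemma Ctime_one (p : J → ℝ) (π : Fin 2 → J → ℕ) (s : J → Fin 2) (j : J) :
    Ctime p (fun _ => (1:ℝ)) π s j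
      = ∑ x ∈ univ.filter (fun x => s x = s j ∧ π (s j) x ≤ π (s j) j), p x := by
  simp only [Ctime, div_one]
  refine Finset.sum_congr ?_ fun _ _ => rfl
  ext x
  simp

lemma Ct_lt (p : J → ℝ) (hp : ∀ j, 0 < p j) (π : Fin 2 → J → ℕ) (s : J → Fin 2)
    {a b : J} (hab : s a = s b) (h : π (s b) a < π (s b) b) :
    Ctime p (fun _ => (1:ℝ)) π s a + p b ≤ Ctime p (fun _ => (1:ℝ)) π s b := by
  rw [Ctime_one, Ctime_one, hab]
  have hnb : b ∉ univ.filter (fun x => s x = s b ∧ π (s b) x ≤ π (s b) a) := by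
    simp only [mem_filter, mem_univ, true_and, not_and, not_le]
    exact h
  have hsub : insert b (univ.filter (fun x => s x = s b ∧ π (s b) x ≤ π (s b) a))
      ⊆ univ.filter (fun x => s x = s b ∧ π (s b) x ≤ π (s b) b) := by
    intro x hx
    rcases mem_insert.mp hx with rfl | hx
    · simp
    · simp only [mem_filter, mem_univ, true_and] at hx ⊢
      exact ⟨hx.1, hx.2.trans h.le⟩
  calc (∑ x ∈ univ.filter (fun x => s x = s b ∧ π (s b) x ≤ π (s b) a), p x) + p b
      = ∑ x ∈ insert b (univ.filter (fun x => s x = s b ∧ π (s b) x ≤ π (s b) a)), p x := by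
        rw [sum_insert hnb]; ring
    _ ≤ _ := sum_le_sum_of_subset_of_nonneg hsub (fun x _ _ => (hp x).le)

lemma rank_mono (cls : J → K) (p : J → ℝ) (r : Fin 2 → ℝ) (π : Fin 2 → J → ℕ)
    (s s' : J → Fin 2) (j : J)
    (h1 : ∀ j', Ctime p r π s j' < Ctime p r π s j → Ctime p r π s' j' < Ctime p r π s' j)
    (h2 : ∀ j', Ctime p r π s j' ≤ Ctime p r π s j → Ctime p r π s' j' ≤ Ctime p r π s' j) :
    rankC cls p r π s j ≤ rankC cls p r π s' j := by
  have key : ∀ t : J → Fin 2,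
      (univ.filter (fun j' => cls j' = cls j ∧ Ctime p r π t j' ≤ Ctime p r π t j)).card
        = (univ.filter (fun j' => cls j' = cls j ∧ Ctime p r π t j' < Ctime p r π t j)).card
        + (univ.filter (fun j' => cls j' = cls j ∧ Ctime p r π t j' = Ctime p r π t j)).card := by
    intro t
    have hd : Disjoint
        (univ.filter (fun j' => cls j' = cls j ∧ Ctime p r π t j' < Ctime p r π t j))
        (univ.filter (fun j' => cls j' = cls j ∧ Ctime p r π t j' = Ctime p r π t j)) := by
      rw [disjoint_left]
      intro x hx hx'
      simp only [mem_filter, mem_univ, true_and] at hx hx'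
      exact absurd hx'.2 (ne_of_lt hx.2)
    have hu : (univ.filter (fun j' => cls j' = cls j ∧ Ctime p r π t j' < Ctime p r π t j))
        ∪ (univ.filter (fun j' => cls j' = cls j ∧ Ctime p r π t j' = Ctime p r π t j))
        = univ.filter (fun j' => cls j' = cls j ∧ Ctime p r π t j' ≤ Ctime p r π t j) := by
      ext x
      simp only [mem_union, mem_filter, mem_univ, true_and]
      constructor
      · rintro (⟨h, h'⟩ | ⟨h, h'⟩)
        exacts [⟨h, h'.le⟩, ⟨h, h'.le⟩]
      · rintro ⟨h, h'⟩
        rcases h'.lt_or_eq with h'' | h''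
        exacts [Or.inl ⟨h, h''⟩, Or.inr ⟨h, h''⟩]
    rw [← hu, card_union_of_disjoint hd]
  have m1 : (univ.filter (fun j' => cls j' = cls j ∧ Ctime p r π s j' < Ctime p r π s j)).card
      ≤ (univ.filter (fun j' => cls j' = cls j ∧ Ctime p r π s' j' < Ctime p r π s' j)).card := by
    apply card_le_card
    intro x hx
    simp only [mem_filter, mem_univ, true_and] at hx ⊢
    exact ⟨hx.1, h1 x hx.2⟩
  have m2 : (univ.filter (fun j' => cls j' = cls j ∧ Ctime p r π s j' ≤ Ctime p r π s j)).card
      ≤ (univ.filter (fun j' => cls j' = cls j ∧ Ctime p r π s' j' ≤ Ctime p r π s' j)).card := by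
    apply card_le_card
    intro x hx
    simp only [mem_filter, mem_univ, true_and] at hx ⊢
    exact ⟨hx.1, h2 x hx.2⟩
  have e1 := key s
  have e2 := key s'
  rw [rankC, rankC]
  have c1 : ((univ.filter (fun j' => cls j' = cls j ∧ Ctime p r π s j' < Ctime p r π s j)).card : ℝ)
      ≤ ((univ.filter (fun j' => cls j' = cls j ∧ Ctime p r π s' j' < Ctime p r π s' j)).card : ℝ) := by
    exact_mod_cast m1
  have c2 : ((univ.filter (fun j' => cls j' = cls j ∧ Ctime p r π s j' ≤ Ctime p r π s j)).card : ℝ)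
      ≤ ((univ.filter (fun j' => cls j' = cls j ∧ Ctime p r π s' j' ≤ Ctime p r π s' j)).card : ℝ) := by
    exact_mod_cast m2
  have d1 : ((univ.filter (fun j' => cls j' = cls j ∧ Ctime p r π s j' ≤ Ctime p r π s j)).card : ℝ)
      = ((univ.filter (fun j' => cls j' = cls j ∧ Ctime p r π s j' < Ctime p r π s j)).card : ℝ)
      + ((univ.filter (fun j' => cls j' = cls j ∧ Ctime p r π s j' = Ctime p r π s j)).card : ℝ) := by
    exact_mod_cast e1
  have d2 : ((univ.filter (fun j' => cls j' = cls j ∧ Ctime p r π s' j' ≤ Ctime p r π s' j)).card : ℝ)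
      = ((univ.filter (fun j' => cls j' = cls j ∧ Ctime p r π s' j' < Ctime p r π s' j)).card : ℝ)
      + ((univ.filter (fun j' => cls j' = cls j ∧ Ctime p r π s' j' = Ctime p r π s' j)).card : ℝ) := by
    exact_mod_cast e2
  linarith

lemma greedy_full_of_none (p : J → ℝ) (π : Fin 2 → J → ℕ) {f : J → Option (Fin 2)}
    (hf : GreedyIdentical p π f) (hall : ∀ j, f j ≠ none) :
    ∃ s : J → Fin 2, GreedyIdentical p π (fun j => some (s j)) := by
  refine ⟨fun j => (f j).getD 0, ?_⟩
  have he : (fun j => some ((f j).getD 0)) = f := by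
    funext j
    rcases hf' : f j with _ | v
    · exact absurd hf' (hall j)
    · simp
  rw [he]
  exact hf

lemma greedy_total (p : J → ℝ) (π : Fin 2 → J → ℕ) (hπ : ∀ i, Function.Injective (π i)) :
    ∃ s : J → Fin 2, GreedyIdentical p π (fun j => some (s j)) := by
  suffices h : ∀ n (f : J → Option (Fin 2)), GreedyIdentical p π f →
      (univ.filter (fun j => f j = none)).card ≤ n →
      ∃ s : J → Fin 2, GreedyIdentical p π (fun j => some (s j)) by
    exact h (Fintype.card J) _ GreedyIdentical.empty
      (by simpa using (card_filter_le univ _))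
  intro n
  induction n with
  | zero =>
    intro f hf hcard
    refine greedy_full_of_none p π hf (fun j hj => ?_)
    have hmem : j ∈ univ.filter (fun j => f j = none) := by simp [hj]
    rw [Finset.card_eq_zero.mp (Nat.le_zero.mp hcard)] at hmem
    exact absurd hmem (notMem_empty j)
  | succ n ih =>
    intro f hf hcard
    by_cases hall : ∀ j, f j ≠ none
    · exact greedy_full_of_none p π hf hall
    · push_neg at hall
      obtain ⟨j1, hj1⟩ := hall
      have hUne : (univ.filter (fun j => f j = none)).Nonempty := ⟨j1, by simp [hj1]⟩
      obtain ⟨i, hi⟩ : ∃ i : Fin 2, ∀ i',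
          (∑ x ∈ univ.filter (fun x => f x = some i), p x)
            ≤ ∑ x ∈ univ.filter (fun x => f x = some i'), p x := by
        rcases le_total (∑ x ∈ univ.filter (fun x => f x = some 0), p x)
            (∑ x ∈ univ.filter (fun x => f x = some 1), p x) with h | h
        · refine ⟨0, fun i' => ?_⟩
          rcases fin2_cases' (show (0:Fin 2) ≠ 1 by decide) i' with rfl | rfl
          · exact le_refl _
          · exact h
        · refine ⟨1, fun i' => ?_⟩
          rcases fin2_cases' (show (0:Fin 2) ≠ 1 by decide) i' with rfl | rfl
          · exact h
          · exact le_refl _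
      obtain ⟨j, hjU, hjmin⟩ := Finset.exists_min_image _ (π i) hUne
      have hjnone : f j = none := by simp only [mem_filter] at hjU; exact hjU.2
      have hfirst : ∀ j', f j' = none → j' ≠ j → π i j < π i j' := by
        intro j' hj' hne
        refine lt_of_le_of_ne (hjmin j' (by simp [hj'])) (fun h => hne ?_)
        exact (hπ i h).symm
      have hstep : GreedyIdentical p π (Function.update f j (some i)) :=
        GreedyIdentical.step f i j hf hjnone (fun i' => by convert hi i' using 3) hfirst
      refine ih (Function.update f j (some i)) hstep ?_
      have he : univ.filter (fun x => Function.update f j (some i) x = none)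
          = (univ.filter (fun x => f x = none)).erase j := by
        ext x
        simp only [mem_filter, mem_univ, true_and, mem_erase, Function.update_apply]
        by_cases hx : x = j
        · simp [hx]
        · simp [hx]
      rw [he, card_erase_of_mem hjU]
      omega

end MyAux

/-- With Inversed-Policies on two identical machines, for any partition of the jobs
into competition classes, every greedy profile is a NE; in particular a NE exists. -/
theorem inversed_policies_classes_NE {J K : Type*} [Fintype J]
    (p : J → ℝ) (hp : ∀ j, 0 < p j)
    (π : Fin 2 → J → ℕ) (hπ : ∀ i, Function.Injective (π i))
    (hrev : ∀ a b, π 0 a < π 0 b ↔ π 1 b < π 1 a)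
    (cls : J → K) :
    (∀ s : J → Fin 2, GreedyIdentical p π (fun j => some (s j)) →
      IsNEC cls p (fun _ => (1:ℝ)) π s) ∧
    (∃ s : J → Fin 2, IsNEC cls p (fun _ => (1:ℝ)) π s) := by
  have hrev' : ∀ i i' : Fin 2, i ≠ i' → ∀ a b, π i a < π i b ↔ π i' b < π i' a := by
    intro i i' h a b
    fin_cases i <;> fin_cases i' <;>
      first
        | exact absurd rfl h
        | exact hrev a b
        | exact (hrev b a).symm
  have main : ∀ s : J → Fin 2, GreedyIdentical p π (fun j => some (s j)) →
      IsNEC cls p (fun _ => (1:ℝ)) π s := by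
    intro s hG j i hben
    by_cases hii : i = s j
    · subst hii
      simp only [BeneficialC, Function.update_eq_self] at hben
      rcases hben with h | ⟨_, h⟩ <;> exact absurd h (lt_irrefl _)
    · have hsj : s j ≠ i := Ne.symm hii
      have hA' : ∀ (k : Fin 2) (a b : J), s a = k → s b ≠ k → π k a < π k b := by
        intro k a b ha hb
        exact invA p π hrev' hG k a b (by rw [ha]) (by simp [hb])
      have hB' : ∀ (k k' : Fin 2) (a : J), k ≠ k' → s a = k →
          (∑ x ∈ univ.filter (fun x => s x = k ∧ π k x ≤ π k a), p x)
            ≤ (∑ x ∈ univ.filter (fun x => s x = k'), p x) + p a := by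
        intro k k' a hkk' ha
        have h := invB p hp π hrev' hG k k' a hkk' (by rw [ha])
        simpa using h
      set L : ℝ := ∑ x ∈ univ.filter (fun x => s x = i), p x with hL
      have fact1 : Ctime p (fun _ => (1:ℝ)) π (Function.update s j i) j = L + p j := by
        rw [Ctime_one]
        have hup : Function.update s j i j = i := Function.update_self _ _ _
        rw [hup]
        have hfe : univ.filter (fun x => Function.update s j i x = i ∧ π i x ≤ π i j)
            = insert j (univ.filter (fun x => s x = i)) := by
          ext x
          simp only [mem_filter, mem_univ, true_and, mem_insert]
          by_cases hx : x = j
          · subst hx; simp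
          · rw [Function.update_of_ne hx]
            constructor
            · rintro ⟨h1, _⟩; exact Or.inr h1
            · rintro (h | h1)
              · exact absurd h hx
              · exact ⟨h1, (hA' i x j h1 hsj).le⟩
        rw [hfe, sum_insert (by simp [hsj])]
        rw [hL]; ring
      have fact2 : Ctime p (fun _ => (1:ℝ)) π s j ≤ L + p j := by
        rw [Ctime_one]
        exact hB' (s j) i j hsj rfl
      have fact3 : ∀ j', s j' = i →
          Ctime p (fun _ => (1:ℝ)) π (Function.update s j i) j'
            = Ctime p (fun _ => (1:ℝ)) π s j'
          ∧ Ctime p (fun _ => (1:ℝ)) π s j' ≤ L := by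
        intro j' hj'
        have hne : j' ≠ j := fun h => hsj (h ▸ hj')
        constructor
        · rw [Ctime_one, Ctime_one]
          have h1 : Function.update s j i j' = s j' := Function.update_of_ne hne _ _
          rw [h1, hj']
          refine Finset.sum_congr ?_ fun _ _ => rfl
          ext x
          simp only [mem_filter, mem_univ, true_and]
          by_cases hx : x = j
          · simp only [hx, Function.update_self]
            constructor
            · rintro ⟨_, hle⟩
              exact absurd hle (not_le.mpr (hA' i j' j hj' hsj))
            · rintro ⟨h, _⟩; exact absurd h hsj
          · rw [Function.update_of_ne hx]
        · rw [Ctime_one, hj']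
          rw [hL]
          refine sum_le_sum_of_subset_of_nonneg ?_ (fun x _ _ => (hp x).le)
          intro x hx
          simp only [mem_filter, mem_univ, true_and] at hx ⊢
          exact hx.1
      have fact4 : ∀ j', j' ≠ j → s j' = s j → π (s j) j' < π (s j) j →
          Ctime p (fun _ => (1:ℝ)) π (Function.update s j i) j'
            = Ctime p (fun _ => (1:ℝ)) π s j' := by
        intro j' hne hsame hlt
        rw [Ctime_one, Ctime_one]
        have h1 : Function.update s j i j' = s j' := Function.update_of_ne hne _ _
        rw [h1]
        refine Finset.sum_congr ?_ fun _ _ => rfl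
        ext x
        simp only [mem_filter, mem_univ, true_and]
        by_cases hx : x = j
        · simp only [hx]
          rw [hsame]
          constructor <;> rintro ⟨_, hle⟩ <;> exact absurd hle (not_le.mpr hlt)
        · rw [Function.update_of_ne hx]
      have hCs : Ctime p (fun _ => (1:ℝ)) π s j
          ≤ Ctime p (fun _ => (1:ℝ)) π (Function.update s j i) j :=
        fact2.trans (le_of_eq fact1.symm)
      have hcmp : ∀ j',
          (Ctime p (fun _ => (1:ℝ)) π s j' < Ctime p (fun _ => (1:ℝ)) π s j →
            Ctime p (fun _ => (1:ℝ)) π (Function.update s j i) j'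
              < Ctime p (fun _ => (1:ℝ)) π (Function.update s j i) j)
          ∧ (Ctime p (fun _ => (1:ℝ)) π s j' ≤ Ctime p (fun _ => (1:ℝ)) π s j →
            Ctime p (fun _ => (1:ℝ)) π (Function.update s j i) j'
              ≤ Ctime p (fun _ => (1:ℝ)) π (Function.update s j i) j) := by
        intro j'
        by_cases hjj : j' = j
        · constructor
          · intro h; rw [hjj] at h; exact absurd h (lt_irrefl _)
          · intro _; rw [hjj]
        · rcases fin2_cases' hsj (s j') with hsame | hother
          · rcases lt_trichotomy (π (s j) j') (π (s j) j) with hlt | heq | hgt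
            · have e1 := fact4 j' hjj hsame hlt
              have e2 : Ctime p (fun _ => (1:ℝ)) π s j' + p j
                  ≤ Ctime p (fun _ => (1:ℝ)) π s j := Ct_lt p hp π s hsame hlt
              have hstrict : Ctime p (fun _ => (1:ℝ)) π (Function.update s j i) j'
                  < Ctime p (fun _ => (1:ℝ)) π (Function.update s j i) j := by
                rw [e1]; linarith [hp j]
              exact ⟨fun _ => hstrict, fun _ => hstrict.le⟩
            · exact absurd (hπ (s j) heq) hjj
            · have e2 : Ctime p (fun _ => (1:ℝ)) π s j + p j'
                  ≤ Ctime p (fun _ => (1:ℝ)) π s j' :=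
                Ct_lt p hp π s hsame.symm (by rw [hsame]; exact hgt)
              constructor <;> intro h <;> (exfalso; linarith [hp j'])
          · have h3 := fact3 j' hother
            have hstrict : Ctime p (fun _ => (1:ℝ)) π (Function.update s j i) j'
                < Ctime p (fun _ => (1:ℝ)) π (Function.update s j i) j := by
              rw [h3.1, fact1]; linarith [hp j, h3.2]
            exact ⟨fun _ => hstrict, fun _ => hstrict.le⟩
      have hrank : rankC cls p (fun _ => (1:ℝ)) π s j
          ≤ rankC cls p (fun _ => (1:ℝ)) π (Function.update s j i) j :=
        rank_mono cls p _ π s (Function.update s j i) j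
          (fun j' => (hcmp j').1) (fun j' => (hcmp j').2)
      rcases hben with h | ⟨_, h⟩
      · exact absurd h (not_lt.mpr hrank)
      · exact absurd h (not_lt.mpr hCs)
  refine ⟨main, ?_⟩
  obtain ⟨s, hs⟩ := greedy_total p π hπ
  exact ⟨s, main s hs⟩
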